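/- Geometric convergence rate of the fixed-temperature Gibbs sampler: fix β ≥ 0 and let Q := (P_β)^N be the N-step random-scan Gibbs kernel. Then for every probability distribution μ₀ on 𝓑 and every l ≥ 0, d_V(μ₀ Q^l, π_β) ≤ d_V(μ₀, π_β) · ( 1 − ( exp(−β Δ) / (N · C(M,K)) )^N )^l, where d_V(μ,ν) := (1/2) Σ_{B∈𝓑} |μ(B) − ν(B)| is the total variation distance and C(M,K) is the binomial coefficient 'M choose K'. -/

import Mathlib

open Finset Filter

noncomputable section

/-- The configuration space: M×N 0-1 matrices (Bool-valued) whose every column sums to K. -/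
def Config (M N K : ℕ) : Finset (Fin M → Fin N → Bool) :=
  Finset.univ.filter fun B =>
    ∀ j : Fin N, (Finset.univ.filter fun i : Fin M => B i j = true).card = K

/-- Σ_{j∈s} B(i,j), the number of base stations in `s` caching content `i`. -/
def colCount {M N : ℕ} (B : Fin M → Fin N → Bool) (i : Fin M) (s : Finset (Fin N)) : ℕ :=
  (s.filter fun j => B i j = true).card

/-- The cache hit rate h(B) = Σ_s w(s) Σ_i λ_i 1{Σ_{j∈s} B(i,j) ≥ 1}. -/
def hitRate {M N : ℕ} (lam : Fin M → ℝ) (w : Finset (Fin N) → ℝ)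
    (B : Fin M → Fin N → Bool) : ℝ :=
  ∑ s : Finset (Fin N), w s * ∑ i : Fin M, lam i * (if 1 ≤ colCount B i s then (1 : ℝ) else 0)

/-- Columns v ∈ {0,1}^M with Σ_i v_i = K. -/
def colSet (M K : ℕ) : Finset (Fin M → Bool) :=
  Finset.univ.filter fun v => (Finset.univ.filter fun i : Fin M => v i = true).card = K

/-- x[j←v] : x with its j-th column replaced by v. -/
def updCol {M N : ℕ} (x : Fin M → Fin N → Bool) (j : Fin N) (v : Fin M → Bool) :
    Fin M → Fin N → Bool :=
  fun i j' => if j' = j then v i else x i j'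

/-- The Gibbs distribution π_β(B) = exp(β h(B)) / Σ_{B'∈𝓑} exp(β h(B')). -/
def gibbs (M N K : ℕ) (lam : Fin M → ℝ) (w : Finset (Fin N) → ℝ) (β : ℝ)
    (B : Fin M → Fin N → Bool) : ℝ :=
  Real.exp (β * hitRate lam w B) / ∑ B' ∈ Config M N K, Real.exp (β * hitRate lam w B')

/-- The random-scan Gibbs sampling kernel P_β(x,y). -/
def kernel (M N K : ℕ) (lam : Fin M → ℝ) (w : Finset (Fin N) → ℝ) (β : ℝ)
    (x y : Fin M → Fin N → Bool) : ℝ :=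
  (1 / (N : ℝ)) * ∑ j : Fin N,
    if ∀ (i : Fin M) (j' : Fin N), j' ≠ j → x i j' = y i j' then
      Real.exp (β * hitRate lam w y) /
        ∑ v ∈ colSet M K, Real.exp (β * hitRate lam w (updCol x j v))
    else 0

/-- The random-scan Gibbs kernel as a matrix indexed by the configuration space. -/
def kernelM (M N K : ℕ) (lam : Fin M → ℝ) (w : Finset (Fin N) → ℝ) (β : ℝ) :
    Matrix ↥(Config M N K) ↥(Config M N K) ℝ :=
  Matrix.of fun x y => kernel M N K lam w β x.1 y.1

/-- max_{B∈𝓑} h(B). -/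
def maxHit (M N K : ℕ) (lam : Fin M → ℝ) (w : Finset (Fin N) → ℝ) : ℝ :=
  sSup (hitRate lam w '' ↑(Config M N K))

/-- min_{B∈𝓑} h(B). -/
def minHit (M N K : ℕ) (lam : Fin M → ℝ) (w : Finset (Fin N) → ℝ) : ℝ :=
  sInf (hitRate lam w '' ↑(Config M N K))

/-- Δ = max_{B∈𝓑} h(B) − min_{B∈𝓑} h(B). -/
def Delta (M N K : ℕ) (lam : Fin M → ℝ) (w : Finset (Fin N) → ℝ) : ℝ :=
  maxHit M N K lam w - minHit M N K lam w

/-- Total variation distance d_V(μ,ν) = (1/2) Σ_B |μ(B) − ν(B)|. -/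
def dV {S : Type*} [Fintype S] (μ ν : S → ℝ) : ℝ :=
  (1 / 2) * ∑ B : S, |μ B - ν B|

namespace GibbsAux

/-! ### Generic matrix lemmas -/

lemma pow_entry_nonneg {S : Type*} [Fintype S] [DecidableEq S] (A : Matrix S S ℝ)
    (h0 : ∀ x y, 0 ≤ A x y) (n : ℕ) : ∀ x y, 0 ≤ (A ^ n) x y := by
  induction n with
  | zero => intro x y; rw [pow_zero, Matrix.one_apply]; split <;> norm_num
  | succ n ih =>
    intro x y
    rw [pow_succ, Matrix.mul_apply]
    exact Finset.sum_nonneg fun c _ => mul_nonneg (ih x c) (h0 c y)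

lemma pow_row_sum {S : Type*} [Fintype S] [DecidableEq S] (A : Matrix S S ℝ)
    (h1 : ∀ x, ∑ y, A x y = 1) (n : ℕ) : ∀ x, ∑ y, (A ^ n) x y = 1 := by
  induction n with
  | zero => intro x; simp [Matrix.one_apply]
  | succ n ih =>
    intro x
    simp only [pow_succ, Matrix.mul_apply]
    rw [Finset.sum_comm]
    simp_rw [← Finset.mul_sum, h1, mul_one]
    exact ih x

lemma pow_entry_path_le {S : Type*} [Fintype S] [DecidableEq S] (A : Matrix S S ℝ)
    (h0 : ∀ x y, 0 ≤ A x y) (δ : ℝ) (hδ : 0 ≤ δ) :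
    ∀ (n : ℕ) (z : ℕ → S), (∀ k < n, δ ≤ A (z k) (z (k + 1))) →
      δ ^ n ≤ (A ^ n) (z 0) (z n) := by
  intro n
  induction n with
  | zero => intro z _; simp [Matrix.one_apply]
  | succ n ih =>
    intro z hz
    have hstep : (A ^ (n + 1)) (z 0) (z (n + 1))
        = ∑ c, (A ^ n) (z 0) c * A c (z (n + 1)) := by
      rw [pow_succ, Matrix.mul_apply]
    rw [hstep]
    calc δ ^ (n + 1) = δ ^ n * δ := by ring
      _ ≤ (A ^ n) (z 0) (z n) * A (z n) (z (n + 1)) :=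
          mul_le_mul (ih z fun k hk => hz k (Nat.lt_succ_of_lt hk))
            (hz n (Nat.lt_succ_self n)) hδ (pow_entry_nonneg A h0 n _ _)
      _ ≤ ∑ c, (A ^ n) (z 0) c * A c (z (n + 1)) :=
          Finset.single_le_sum (f := fun c => (A ^ n) (z 0) c * A c (z (n + 1)))
            (fun c _ => mul_nonneg (pow_entry_nonneg A h0 n _ _) (h0 _ _))
            (Finset.mem_univ (z n))

lemma vecMul_mass {S : Type*} [Fintype S] (Q : Matrix S S ℝ)
    (hrow : ∀ x, ∑ y, Q x y = 1) (μ : S → ℝ) :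
    ∑ y, Matrix.vecMul μ Q y = ∑ x, μ x := by
  simp only [Matrix.vecMul, dotProduct]
  rw [Finset.sum_comm]
  simp_rw [← Finset.mul_sum, hrow, mul_one]

lemma vecMul_pow_fixed {S : Type*} [Fintype S] [DecidableEq S] (Q : Matrix S S ℝ)
    (π : S → ℝ) (h : Matrix.vecMul π Q = π) (n : ℕ) : Matrix.vecMul π (Q ^ n) = π := by
  induction n with
  | zero => rw [pow_zero, Matrix.vecMul_one]
  | succ n ih => rw [pow_succ, ← Matrix.vecMul_vecMul, ih, h]

lemma contraction {S : Type*} [Fintype S] [Nonempty S]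
    (Q : Matrix S S ℝ) (ε : ℝ) (hε : 0 ≤ ε)
    (hlb : ∀ x y, ε ≤ Q x y)
    (hrow : ∀ x, ∑ y, Q x y = 1)
    (μ ν : S → ℝ) (hmass : ∑ x, μ x = ∑ x, ν x) :
    dV (Matrix.vecMul μ Q) (Matrix.vecMul ν Q) ≤ (1 - ε) * dV μ ν := by
  have hdiff : ∑ x, (μ x - ν x) = 0 := by
    rw [Finset.sum_sub_distrib, hmass, sub_self]
  have key : ∀ y, |Matrix.vecMul μ Q y - Matrix.vecMul ν Q y|
      ≤ ∑ x, |μ x - ν x| * (Q x y - ε) := by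
    intro y
    have h1 : Matrix.vecMul μ Q y - Matrix.vecMul ν Q y
        = ∑ x, (μ x - ν x) * (Q x y - ε) := by
      have h2 : ∑ x, (μ x - ν x) * (Q x y - ε)
          = (∑ x, μ x * Q x y) - (∑ x, ν x * Q x y) - (∑ x, (μ x - ν x)) * ε := by
        rw [Finset.sum_mul, ← Finset.sum_sub_distrib, ← Finset.sum_sub_distrib]
        exact Finset.sum_congr rfl fun x _ => by ring
      rw [h2, hdiff, zero_mul, sub_zero]
      simp [Matrix.vecMul, dotProduct]
    rw [h1]
    calc |∑ x, (μ x - ν x) * (Q x y - ε)| ≤ ∑ x, |(μ x - ν x) * (Q x y - ε)| :=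
          Finset.abs_sum_le_sum_abs _ _
      _ = ∑ x, |μ x - ν x| * (Q x y - ε) :=
          Finset.sum_congr rfl fun x _ => by
            rw [abs_mul, abs_of_nonneg (sub_nonneg.2 (hlb x y))]
  unfold dV
  rw [← mul_assoc, mul_comm (1 - ε) ((1:ℝ)/2), mul_assoc]
  refine mul_le_mul_of_nonneg_left ?_ (by norm_num)
  calc ∑ y, |Matrix.vecMul μ Q y - Matrix.vecMul ν Q y|
      ≤ ∑ y, ∑ x, |μ x - ν x| * (Q x y - ε) := Finset.sum_le_sum fun y _ => key y
    _ = ∑ x, |μ x - ν x| * (1 - (Fintype.card S : ℝ) * ε) := by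
        rw [Finset.sum_comm]
        refine Finset.sum_congr rfl fun x _ => ?_
        rw [← Finset.mul_sum, Finset.sum_sub_distrib, hrow, Finset.sum_const,
          Finset.card_univ, nsmul_eq_mul]
    _ ≤ ∑ x, |μ x - ν x| * (1 - ε) := by
        refine Finset.sum_le_sum fun x _ => ?_
        refine mul_le_mul_of_nonneg_left ?_ (abs_nonneg _)
        have h1 : (1 : ℝ) ≤ (Fintype.card S : ℝ) := by
          exact_mod_cast Fintype.card_pos
        nlinarith
    _ = (1 - ε) * ∑ x, |μ x - ν x| := by rw [← Finset.sum_mul]; ring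

/-! ### Specific lemmas -/

variable {M N K : ℕ} {lam : Fin M → ℝ} {w : Finset (Fin N) → ℝ} {β : ℝ}

lemma card_filter_lt (h : K ≤ M) :
    ((Finset.univ : Finset (Fin M)).filter fun i => i.val < K).card = K := by
  have heq : ((Finset.univ : Finset (Fin M)).filter fun i => i.val < K)
      = Finset.map (Fin.castLEEmb h) Finset.univ := by
    ext i
    simp only [Finset.mem_filter, Finset.mem_univ, true_and, Finset.mem_map]
    constructor
    · intro hi
      exact ⟨⟨i.val, hi⟩, by simp [Fin.castLEEmb, Fin.castLE, Fin.ext_iff]⟩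
    · rintro ⟨a, -, rfl⟩
      simp [Fin.castLEEmb, Fin.castLE]
  rw [heq, Finset.card_map, Finset.card_univ, Fintype.card_fin]

lemma mem_colSet {v : Fin M → Bool} :
    v ∈ colSet M K ↔ ((Finset.univ : Finset (Fin M)).filter fun i => v i = true).card = K := by
  simp [colSet]

lemma colSet_nonempty (h : K ≤ M) : (colSet M K).Nonempty := by
  refine ⟨fun i => decide ((i : ℕ) < K), ?_⟩
  rw [mem_colSet]
  simpa using card_filter_lt h

lemma card_colSet : (colSet M K).card = M.choose K := by
  have h : (colSet M K).card
      = (Finset.powersetCard K (Finset.univ : Finset (Fin M))).card := by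
    apply Finset.card_nbij' (fun v => Finset.univ.filter fun i => v i = true)
      (fun t => fun i => decide (i ∈ t))
    · intro v hv
      simp only [Finset.mem_coe] at hv ⊢
      rw [Finset.mem_powersetCard]
      exact ⟨Finset.subset_univ _, mem_colSet.1 hv⟩
    · intro t ht
      simp only [Finset.mem_coe] at ht ⊢
      rw [Finset.mem_powersetCard] at ht
      rw [mem_colSet]
      have : (Finset.univ.filter fun i => decide (i ∈ t) = true) = t := by
        ext i; simp
      rw [this]; exact ht.2
    · intro v _
      funext i
      by_cases h : v i = true <;> simp [h]
    · intro t _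
      ext i; simp
  rw [h, Finset.card_powersetCard, Finset.card_univ, Fintype.card_fin]

lemma mem_Config {B : Fin M → Fin N → Bool} :
    B ∈ Config M N K ↔
      ∀ j, ((Finset.univ : Finset (Fin M)).filter fun i => B i j = true).card = K := by
  simp [Config]

lemma config_nonempty (h : K ≤ M) : (Config M N K).Nonempty := by
  refine ⟨fun i _ => decide ((i : ℕ) < K), ?_⟩
  rw [mem_Config]
  intro j
  simpa using card_filter_lt h

lemma updCol_mem {x : Fin M → Fin N → Bool} (hx : x ∈ Config M N K) {j : Fin N}
    {v : Fin M → Bool} (hv : v ∈ colSet M K) : updCol x j v ∈ Config M N K := by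
  rw [mem_Config] at hx ⊢
  intro j'
  by_cases hj : j' = j
  · subst hj
    have heq : (Finset.univ.filter fun i => updCol x j' v i j' = true)
        = Finset.univ.filter fun i => v i = true :=
      Finset.filter_congr fun i _ => by simp [updCol]
    rw [heq]; exact mem_colSet.1 hv
  · have heq : (Finset.univ.filter fun i => updCol x j v i j' = true)
        = Finset.univ.filter fun i => x i j' = true :=
      Finset.filter_congr fun i _ => by simp [updCol, hj]
    rw [heq]; exact hx j'

lemma hit_le_max {B : Fin M → Fin N → Bool} (hB : B ∈ Config M N K) :
    hitRate lam w B ≤ maxHit M N K lam w :=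
  le_csSup (((Config M N K).finite_toSet.image _).bddAbove) ⟨B, Finset.mem_coe.2 hB, rfl⟩

lemma min_le_hit {B : Fin M → Fin N → Bool} (hB : B ∈ Config M N K) :
    minHit M N K lam w ≤ hitRate lam w B :=
  csInf_le (((Config M N K).finite_toSet.image _).bddBelow) ⟨B, Finset.mem_coe.2 hB, rfl⟩


/-! ### Kernel lemmas -/

lemma Zpos (hKM : K ≤ M) (x : Fin M → Fin N → Bool) (j : Fin N) :
    0 < ∑ v ∈ colSet M K, Real.exp (β * hitRate lam w (updCol x j v)) :=
  Finset.sum_pos (fun _ _ => Real.exp_pos _) (colSet_nonempty hKM)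

lemma Zle (hβ : 0 ≤ β) {x : Fin M → Fin N → Bool} (hx : x ∈ Config M N K) (j : Fin N) :
    ∑ v ∈ colSet M K, Real.exp (β * hitRate lam w (updCol x j v))
      ≤ (M.choose K : ℝ) * Real.exp (β * maxHit M N K lam w) := by
  calc ∑ v ∈ colSet M K, Real.exp (β * hitRate lam w (updCol x j v))
      ≤ ∑ _v ∈ colSet M K, Real.exp (β * maxHit M N K lam w) := by
        refine Finset.sum_le_sum fun v hv => ?_
        exact Real.exp_le_exp.2
          (mul_le_mul_of_nonneg_left (hit_le_max (updCol_mem hx hv)) hβ)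
    _ = (M.choose K : ℝ) * Real.exp (β * maxHit M N K lam w) := by
        rw [Finset.sum_const, card_colSet, nsmul_eq_mul]

lemma kernel_nonneg (x y : Fin M → Fin N → Bool) : 0 ≤ kernel M N K lam w β x y := by
  unfold kernel
  refine mul_nonneg (by positivity) (Finset.sum_nonneg fun j _ => ?_)
  split
  · exact div_nonneg (Real.exp_pos _).le
      (Finset.sum_nonneg fun v _ => (Real.exp_pos _).le)
  · exact le_refl 0

lemma kernel_row_sum (hN : 0 < N) (hKM : K ≤ M) {x : Fin M → Fin N → Bool}
    (hx : x ∈ Config M N K) :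
    ∑ y ∈ Config M N K, kernel M N K lam w β x y = 1 := by
  unfold kernel
  rw [← Finset.mul_sum, Finset.sum_comm]
  have hj : ∀ j : Fin N, (∑ y ∈ Config M N K,
      if ∀ (i : Fin M) (j' : Fin N), j' ≠ j → x i j' = y i j' then
        Real.exp (β * hitRate lam w y) /
          ∑ v ∈ colSet M K, Real.exp (β * hitRate lam w (updCol x j v))
      else 0) = 1 := by
    intro j
    classical
    rw [← Finset.sum_filter, ← Finset.sum_div]
    rw [show ∑ y ∈ (Config M N K).filter
          (fun y => ∀ (i : Fin M) (j' : Fin N), j' ≠ j → x i j' = y i j'),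
          Real.exp (β * hitRate lam w y)
        = ∑ v ∈ colSet M K, Real.exp (β * hitRate lam w (updCol x j v)) from ?_]
    · exact div_self (Zpos hKM x j).ne'
    · apply Finset.sum_nbij' (fun y => fun i => y i j) (fun v => updCol x j v)
      · intro y hy
        rw [Finset.mem_filter] at hy
        exact mem_colSet.2 (mem_Config.1 hy.1 j)
      · intro v hv
        rw [Finset.mem_filter]
        refine ⟨updCol_mem hx hv, fun i j' hj' => ?_⟩
        simp [updCol, hj']
      · intro y hy
        rw [Finset.mem_filter] at hy
        funext i j'
        by_cases h : j' = j
        · subst h; simp [updCol]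
        · simp [updCol, h, hy.2 i j' h]
      · intro v _
        funext i
        simp [updCol]
      · intro y hy
        rw [Finset.mem_filter] at hy
        have hupd : updCol x j (fun i => y i j) = y := by
          funext i j'
          by_cases h : j' = j
          · subst h; simp [updCol]
          · simp [updCol, h, hy.2 i j' h]
        rw [hupd]
  rw [Finset.sum_congr rfl fun j _ => hj j, Finset.sum_const, Finset.card_univ,
    Fintype.card_fin, nsmul_eq_mul, mul_one]
  field_simp

lemma detailed_balance (x y : Fin M → Fin N → Bool) :
    Real.exp (β * hitRate lam w x) * kernel M N K lam w β x y
      = Real.exp (β * hitRate lam w y) * kernel M N K lam w β y x := by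
  unfold kernel
  rw [Finset.mul_sum, Finset.mul_sum, Finset.mul_sum, Finset.mul_sum]
  refine Finset.sum_congr rfl fun j _ => ?_
  by_cases hagree : ∀ (i : Fin M) (j' : Fin N), j' ≠ j → x i j' = y i j'
  · have hagree' : ∀ (i : Fin M) (j' : Fin N), j' ≠ j → y i j' = x i j' :=
      fun i j' h => (hagree i j' h).symm
    rw [if_pos hagree, if_pos hagree']
    have hupd : ∀ v, updCol x j v = updCol y j v := by
      intro v; funext i j'
      by_cases h : j' = j
      · simp [updCol, h]
      · simp [updCol, h, hagree i j' h]
    have hZ : ∑ v ∈ colSet M K, Real.exp (β * hitRate lam w (updCol x j v))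
        = ∑ v ∈ colSet M K, Real.exp (β * hitRate lam w (updCol y j v)) :=
      Finset.sum_congr rfl fun v _ => by rw [hupd]
    rw [hZ]; ring
  · have hagree' : ¬ ∀ (i : Fin M) (j' : Fin N), j' ≠ j → y i j' = x i j' :=
      fun h => hagree fun i j' hj => (h i j' hj).symm
    rw [if_neg hagree, if_neg hagree']
    ring

lemma gibbs_stationary (hN : 0 < N) (hKM : K ≤ M) {y : Fin M → Fin N → Bool}
    (hy : y ∈ Config M N K) :
    ∑ x ∈ Config M N K, gibbs M N K lam w β x * kernel M N K lam w β x y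
      = gibbs M N K lam w β y := by
  unfold gibbs
  have hstep : ∀ x ∈ Config M N K,
      Real.exp (β * hitRate lam w x) /
          (∑ B' ∈ Config M N K, Real.exp (β * hitRate lam w B')) *
          kernel M N K lam w β x y
        = Real.exp (β * hitRate lam w y) /
            (∑ B' ∈ Config M N K, Real.exp (β * hitRate lam w B')) *
            kernel M N K lam w β y x := by
    intro x _
    rw [div_mul_eq_mul_div, div_mul_eq_mul_div, detailed_balance]
  rw [Finset.sum_congr rfl hstep, ← Finset.mul_sum, kernel_row_sum hN hKM hy, mul_one]


lemma kernel_step_lb (hKM : K ≤ M) (hβ : 0 ≤ β)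
    {x y : Fin M → Fin N → Bool} (hx : x ∈ Config M N K) (hy : y ∈ Config M N K)
    (j₀ : Fin N) (hagree : ∀ (i : Fin M) (j' : Fin N), j' ≠ j₀ → x i j' = y i j') :
    Real.exp (-β * Delta M N K lam w) / ((N : ℝ) * (M.choose K : ℝ))
      ≤ kernel M N K lam w β x y := by
  have hC : (0 : ℝ) < (M.choose K : ℝ) := by exact_mod_cast Nat.choose_pos hKM
  have hZpos := Zpos (lam := lam) (w := w) (β := β) hKM x j₀
  have hZle := Zle (lam := lam) (w := w) hβ hx j₀
  have ht : Real.exp (-β * Delta M N K lam w) / (M.choose K : ℝ)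
      ≤ Real.exp (β * hitRate lam w y) /
          ∑ v ∈ colSet M K, Real.exp (β * hitRate lam w (updCol x j₀ v)) := by
    have h1 : Real.exp (β * minHit M N K lam w) ≤ Real.exp (β * hitRate lam w y) :=
      Real.exp_le_exp.2 (mul_le_mul_of_nonneg_left (min_le_hit hy) hβ)
    have key : Real.exp (-β * Delta M N K lam w) / (M.choose K : ℝ)
        = Real.exp (β * minHit M N K lam w) /
            ((M.choose K : ℝ) * Real.exp (β * maxHit M N K lam w)) := by
      rw [show β * minHit M N K lam w
          = -β * Delta M N K lam w + β * maxHit M N K lam w by unfold Delta; ring,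
        Real.exp_add]
      rw [div_eq_div_iff hC.ne' (by positivity)]
      ring
    rw [key]
    exact div_le_div₀ (Real.exp_pos _).le h1 hZpos hZle
  have hterm : (if ∀ (i : Fin M) (j' : Fin N), j' ≠ j₀ → x i j' = y i j' then
      Real.exp (β * hitRate lam w y) /
        ∑ v ∈ colSet M K, Real.exp (β * hitRate lam w (updCol x j₀ v))
      else 0)
      = Real.exp (β * hitRate lam w y) /
        ∑ v ∈ colSet M K, Real.exp (β * hitRate lam w (updCol x j₀ v)) :=
    if_pos hagree
  have hsum : Real.exp (β * hitRate lam w y) /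
      (∑ v ∈ colSet M K, Real.exp (β * hitRate lam w (updCol x j₀ v)))
      ≤ ∑ j : Fin N, (if ∀ (i : Fin M) (j' : Fin N), j' ≠ j → x i j' = y i j' then
        Real.exp (β * hitRate lam w y) /
          ∑ v ∈ colSet M K, Real.exp (β * hitRate lam w (updCol x j v))
        else 0) := by
    have hnn : ∀ j ∈ (Finset.univ : Finset (Fin N)),
        0 ≤ (fun j : Fin N => if ∀ (i : Fin M) (j' : Fin N), j' ≠ j → x i j' = y i j' then
          Real.exp (β * hitRate lam w y) /
            ∑ v ∈ colSet M K, Real.exp (β * hitRate lam w (updCol x j v))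
          else 0) j := by
      intro j _
      dsimp only
      split
      · exact div_nonneg (Real.exp_pos _).le
          (Finset.sum_nonneg fun v _ => (Real.exp_pos _).le)
      · exact le_refl 0
    have h2 := Finset.single_le_sum hnn (Finset.mem_univ j₀)
    rw [hterm] at h2
    exact h2
  calc Real.exp (-β * Delta M N K lam w) / ((N : ℝ) * (M.choose K : ℝ))
      = (1 / (N : ℝ)) * (Real.exp (-β * Delta M N K lam w) / (M.choose K : ℝ)) := by
        ring
    _ ≤ (1 / (N : ℝ)) * (Real.exp (β * hitRate lam w y) /
          ∑ v ∈ colSet M K, Real.exp (β * hitRate lam w (updCol x j₀ v))) :=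
        mul_le_mul_of_nonneg_left ht (by positivity)
    _ ≤ kernel M N K lam w β x y :=
        mul_le_mul_of_nonneg_left hsum (by positivity)

lemma path_mem {x y : Fin M → Fin N → Bool} (hx : x ∈ Config M N K)
    (hy : y ∈ Config M N K) (k : ℕ) :
    (fun (i : Fin M) (j : Fin N) => if (j : ℕ) < k then y i j else x i j) ∈ Config M N K := by
  rw [mem_Config] at hx hy ⊢
  intro j
  by_cases h : (j : ℕ) < k
  · have : (Finset.univ.filter fun i =>
        (if (j : ℕ) < k then y i j else x i j) = true)
        = Finset.univ.filter fun i => y i j = true :=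
      Finset.filter_congr fun i _ => by simp [h]
    rw [this]; exact hy j
  · have : (Finset.univ.filter fun i =>
        (if (j : ℕ) < k then y i j else x i j) = true)
        = Finset.univ.filter fun i => x i j = true :=
      Finset.filter_congr fun i _ => by simp [h]
    rw [this]; exact hx j

lemma kernelM_pow_lb (hN : 0 < N) (hKM : K ≤ M) (hβ : 0 ≤ β)
    (x y : ↥(Config M N K)) :
    (Real.exp (-β * Delta M N K lam w) / ((N : ℝ) * (M.choose K : ℝ))) ^ N
      ≤ (kernelM M N K lam w β ^ N) x y := by
  classical
  set δ := Real.exp (-β * Delta M N K lam w) / ((N : ℝ) * (M.choose K : ℝ)) with hδdef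
  have hδ : 0 ≤ δ := by positivity
  set z : ℕ → ↥(Config M N K) := fun k =>
    ⟨fun (i : Fin M) (j : Fin N) => if (j : ℕ) < k then y.1 i j else x.1 i j, path_mem x.2 y.2 k⟩ with hz
  have hz0 : z 0 = x := by
    apply Subtype.ext; funext i j; simp [hz]
  have hzN : z N = y := by
    apply Subtype.ext; funext i j; simp [hz, j.isLt]
  have hstep : ∀ k < N, δ ≤ kernelM M N K lam w β (z k) (z (k + 1)) := by
    intro k hk
    apply kernel_step_lb hKM hβ (z k).2 (z (k + 1)).2 ⟨k, hk⟩
    intro i j' hj'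
    have hvne : (j' : ℕ) ≠ k := fun h => hj' (Fin.ext h)
    show (if (j' : ℕ) < k then y.1 i j' else x.1 i j')
        = (if (j' : ℕ) < k + 1 then y.1 i j' else x.1 i j')
    by_cases h : (j' : ℕ) < k
    · rw [if_pos h, if_pos (Nat.lt_succ_of_lt h)]
    · rw [if_neg h, if_neg (by omega)]
  have := pow_entry_path_le (kernelM M N K lam w β)
    (fun a b => kernel_nonneg a.1 b.1) δ hδ N z hstep
  rw [hz0, hzN] at this
  exact this

lemma kernelM_row_sum (hN : 0 < N) (hKM : K ≤ M) (x : ↥(Config M N K)) :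
    ∑ y, kernelM M N K lam w β x y = 1 := by
  have h := Finset.sum_coe_sort (Config M N K) (kernel M N K lam w β x.1)
  calc ∑ y, kernelM M N K lam w β x y
      = ∑ y ∈ Config M N K, kernel M N K lam w β x.1 y := h
    _ = 1 := kernel_row_sum hN hKM x.2

lemma gibbs_sum_one (hKM : K ≤ M) :
    ∑ B : ↥(Config M N K), gibbs M N K lam w β B.1 = 1 := by
  have hZ : (0 : ℝ) < ∑ B' ∈ Config M N K, Real.exp (β * hitRate lam w B') :=
    Finset.sum_pos (fun _ _ => Real.exp_pos _) (config_nonempty hKM)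
  calc ∑ B : ↥(Config M N K), gibbs M N K lam w β B.1
      = ∑ B ∈ Config M N K, gibbs M N K lam w β B :=
        Finset.sum_coe_sort (Config M N K) (gibbs M N K lam w β)
    _ = 1 := by
        unfold gibbs
        rw [← Finset.sum_div, div_self hZ.ne']

lemma pi_stationary (hN : 0 < N) (hKM : K ≤ M) :
    Matrix.vecMul (fun B : ↥(Config M N K) => gibbs M N K lam w β B.1)
      (kernelM M N K lam w β) = fun B => gibbs M N K lam w β B.1 := by
  funext y
  show ∑ x : ↥(Config M N K),
      gibbs M N K lam w β x.1 * kernelM M N K lam w β x y = gibbs M N K lam w β y.1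
  calc ∑ x : ↥(Config M N K), gibbs M N K lam w β x.1 * kernelM M N K lam w β x y
      = ∑ x ∈ Config M N K, gibbs M N K lam w β x * kernel M N K lam w β x y.1 :=
        Finset.sum_coe_sort (Config M N K)
          (fun x => gibbs M N K lam w β x * kernel M N K lam w β x y.1)
    _ = gibbs M N K lam w β y.1 := gibbs_stationary hN hKM y.2

end GibbsAux

open GibbsAux

/-- geometric convergence of the fixed-temperature Gibbs sampler:
with Q = (P_β)^N, d_V(μ₀ Q^l, π_β) ≤ d_V(μ₀, π_β)·(1 − (exp(−βΔ)/(N·C(M,K)))^N)^l. -/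
theorem gibbs_sampler_geometric_convergence (M N K : ℕ) (hM : 1 ≤ M) (hN : 1 ≤ N)
    (hK : 1 ≤ K) (hKM : K < M)
    (lam : Fin M → ℝ) (hlam : ∀ i, 0 ≤ lam i)
    (w : Finset (Fin N) → ℝ) (hw : ∀ s, 0 ≤ w s)
    (β : ℝ) (hβ : 0 ≤ β)
    (μ₀ : ↥(Config M N K) → ℝ) (hμ0 : ∀ B, 0 ≤ μ₀ B) (hμsum : ∑ B, μ₀ B = 1)
    (l : ℕ) :
    dV (Matrix.vecMul μ₀ ((kernelM M N K lam w β ^ N) ^ l))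
        (fun B => gibbs M N K lam w β B.1) ≤
      dV μ₀ (fun B => gibbs M N K lam w β B.1) *
        (1 - (Real.exp (-β * Delta M N K lam w) / ((N : ℝ) * (M.choose K : ℝ))) ^ N) ^ l := by
  classical
  have hKM' : K ≤ M := le_of_lt hKM
  have hNpos : 0 < N := hN
  have hne : (Config M N K).Nonempty := config_nonempty hKM'
  haveI : Nonempty ↥(Config M N K) := ⟨⟨hne.choose, hne.choose_spec⟩⟩
  set A := kernelM M N K lam w β with hA
  set π : ↥(Config M N K) → ℝ := fun B => gibbs M N K lam w β B.1 with hπ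
  set ε := (Real.exp (-β * Delta M N K lam w) / ((N : ℝ) * (M.choose K : ℝ))) ^ N with hε
  have hεnn : 0 ≤ ε := by positivity
  have hAnn : ∀ x y : ↥(Config M N K), 0 ≤ A x y := fun x y => kernel_nonneg x.1 y.1
  have hArow : ∀ x, ∑ y, A x y = 1 := kernelM_row_sum hNpos hKM'
  have hQrow : ∀ x, ∑ y, (A ^ N) x y = 1 := pow_row_sum A hArow N
  have hQnn : ∀ x y, 0 ≤ (A ^ N) x y := pow_entry_nonneg A hAnn N
  have hQlb : ∀ x y, ε ≤ (A ^ N) x y := kernelM_pow_lb hNpos hKM' hβ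
  have hπQ : Matrix.vecMul π (A ^ N) = π :=
    vecMul_pow_fixed A π (pi_stationary hNpos hKM') N
  have hπsum : ∑ B, π B = 1 := gibbs_sum_one hKM'
  have h1ε : 0 ≤ 1 - ε := by
    have hx : ε ≤ 1 := by
      obtain ⟨x⟩ := (inferInstance : Nonempty ↥(Config M N K))
      calc ε ≤ (A ^ N) x x := hQlb x x
        _ ≤ ∑ y, (A ^ N) x y :=
            Finset.single_le_sum (fun y _ => hQnn x y) (Finset.mem_univ x)
        _ = 1 := hQrow x
    linarith
  induction l with
  | zero => simp [Matrix.vecMul_one]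
  | succ l ih =>
    have hmass_l : ∑ x, Matrix.vecMul μ₀ ((A ^ N) ^ l) x = ∑ x, π x := by
      rw [vecMul_mass ((A ^ N) ^ l) (pow_row_sum (A ^ N) hQrow l) μ₀, hμsum, hπsum]
    calc dV (Matrix.vecMul μ₀ ((A ^ N) ^ (l + 1))) π
        = dV (Matrix.vecMul (Matrix.vecMul μ₀ ((A ^ N) ^ l)) (A ^ N))
            (Matrix.vecMul π (A ^ N)) := by
          rw [pow_succ, ← Matrix.vecMul_vecMul, hπQ]
      _ ≤ (1 - ε) * dV (Matrix.vecMul μ₀ ((A ^ N) ^ l)) π :=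
          contraction (A ^ N) ε hεnn hQlb hQrow _ π hmass_l
      _ ≤ (1 - ε) * (dV μ₀ π * (1 - ε) ^ l) := by
          exact mul_le_mul_of_nonneg_left ih h1ε
      _ = dV μ₀ π * (1 - ε) ^ (l + 1) := by ring
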